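/- Let ε ∈ [0,1), let ρ*_ε = max over p ∈ [0,1/2] of H_b(p)/(p + 1/(1-ε)), let p_ε be the corresponding maximizer, and define h*_ε: [0,1] → ℝ by h*_ε(z) = (1-ε)·H_b(z) - z·(1-ε)·ρ*_ε for 0 ≤ z ≤ p_ε and h*_ε(z) = ρ*_ε for p_ε ≤ z ≤ 1. Then the Bellman equation holds: for every z ∈ [0,1], h*_ε(z) + ρ*_ε = sup over δ ∈ [0,z] of [ (1-ε)·H_b(δ) + (1-ε)·(1-δ)·h*_ε(1) + ε·h*_ε(1-δ) + (1-ε)·δ·h*_ε(0) ]. -/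

import Mathlib

/-- Binary entropy function (base 2), with the convention `0 * log 0 = 0`. -/
noncomputable def Hb (p : ℝ) : ℝ := -p * Real.logb 2 p - (1 - p) * Real.logb 2 (1 - p)

lemma Hb_eq (p : ℝ) : Hb p = (Real.log 2)⁻¹ * Real.binEntropy p := by
  unfold Hb Real.binEntropy Real.logb
  rw [Real.log_inv, Real.log_inv]
  field_simp
  ring

lemma Hb_zero : Hb 0 = 0 := by simp [Hb]

lemma Hb_one_sub (p : ℝ) : Hb (1 - p) = Hb p := by
  unfold Hb; rw [sub_sub_cancel]; ring

lemma Hb_nonneg {p : ℝ} (h0 : 0 ≤ p) (h1 : p ≤ 1) : 0 ≤ Hb p := by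
  rw [Hb_eq]
  exact mul_nonneg (by positivity) (Real.binEntropy_nonneg h0 h1)

lemma Hb_concave : ConcaveOn ℝ (Set.Icc (0:ℝ) 1) Hb := by
  have := (Real.strictConcave_binEntropy.concaveOn).smul
    (c := (Real.log 2)⁻¹) (by positivity)
  have e : Hb = fun x => (Real.log 2)⁻¹ • Real.binEntropy x := by
    funext p
    simp [Hb_eq, Pi.smul_apply]
  rw [e]; exact this

set_option maxHeartbeats 1000000 in
/-- Let ε ∈ [0,1), let `ρ` be the maximum of `H_b(p)/(p + 1/(1-ε))` over p ∈ [0,1/2],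
attained at `pε`, and let `h` be the function equal to `(1-ε)·H_b(z) - z·(1-ε)·ρ` for
`0 ≤ z ≤ pε` and equal to `ρ` for `pε ≤ z ≤ 1`. Then the Bellman equation holds: for every
z ∈ [0,1],
`h(z) + ρ = sup_{δ ∈ [0,z]} [(1-ε)·H_b(δ) + (1-ε)(1-δ)·h(1) + ε·h(1-δ) + (1-ε)·δ·h(0)]`. -/
theorem bellman_equation (ε ρ pε : ℝ) (h : ℝ → ℝ) (hε0 : 0 ≤ ε) (hε1 : ε < 1)
    (hpε : pε ∈ Set.Icc (0 : ℝ) (1 / 2))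
    (hmax : ∀ q ∈ Set.Icc (0 : ℝ) (1 / 2),
      Hb q / (q + 1 / (1 - ε)) ≤ Hb pε / (pε + 1 / (1 - ε)))
    (hρ : ρ = Hb pε / (pε + 1 / (1 - ε)))
    (hlow : ∀ z : ℝ, 0 ≤ z → z ≤ pε → h z = (1 - ε) * Hb z - z * (1 - ε) * ρ)
    (hhigh : ∀ z : ℝ, pε ≤ z → z ≤ 1 → h z = ρ) :
    ∀ z ∈ Set.Icc (0 : ℝ) 1,
      h z + ρ =
        sSup ((fun δ => (1 - ε) * Hb δ + (1 - ε) * (1 - δ) * h 1 + ε * h (1 - δ)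
          + (1 - ε) * δ * h 0) '' Set.Icc (0 : ℝ) z) := by
  have hc : (0:ℝ) < 1 - ε := by linarith
  obtain ⟨hp0, hp12⟩ := hpε
  have hp1 : pε ≤ 1 := by linarith
  have hden : (0:ℝ) < pε + 1 / (1 - ε) := by positivity
  have hρ0 : 0 ≤ ρ := by
    rw [hρ]; exact div_nonneg (Hb_nonneg hp0 hp1) hden.le
  -- equality at pε
  have keyeq : (1 - ε) * Hb pε = (1 - ε) * ρ * pε + ρ := by
    have h1 : Hb pε = ρ * (pε + 1 / (1 - ε)) := by
      rw [hρ]; field_simp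
    have h2 : (1 - ε) * (1 / (1 - ε)) = 1 := by field_simp
    rw [h1]; nlinarith [h2]
  -- key inequality on [0, 1/2]
  have key : ∀ q : ℝ, 0 ≤ q → q ≤ 1 / 2 → (1 - ε) * Hb q ≤ (1 - ε) * ρ * q + ρ := by
    intro q hq0 hq12
    have h1 : Hb q / (q + 1 / (1 - ε)) ≤ ρ := by
      rw [hρ]; exact hmax q ⟨hq0, hq12⟩
    have hdq : (0:ℝ) < q + 1 / (1 - ε) := by positivity
    have h2 : Hb q ≤ ρ * (q + 1 / (1 - ε)) := by
      rw [← div_le_iff₀ hdq] at *; linarith [h1]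
    have h3 : (1 - ε) * (1 / (1 - ε)) = 1 := by field_simp
    nlinarith [mul_le_mul_of_nonneg_left h2 hc.le]
  -- monotonicity of g on [0, pε]
  have mono : ∀ a b : ℝ, 0 ≤ a → a ≤ b → b ≤ pε →
      (1 - ε) * Hb a - a * (1 - ε) * ρ ≤ (1 - ε) * Hb b - b * (1 - ε) * ρ := by
    intro a b ha0 hab hbp
    have hape : (1 - ε) * Hb a - a * (1 - ε) * ρ ≤ (1 - ε) * Hb pε - pε * (1 - ε) * ρ := by
      have := key a ha0 (by linarith)
      nlinarith [keyeq]
    rcases eq_or_lt_of_le hab with rfl | hab'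
    · exact le_rfl
    rcases eq_or_lt_of_le hbp with rfl | hbp'
    · linarith [hape]
    have hap : a < pε := lt_trans hab' hbp'
    set lam : ℝ := (pε - b) / (pε - a) with hlam
    set mu : ℝ := (b - a) / (pε - a) with hmu
    have hpa : (0:ℝ) < pε - a := by linarith
    have hlam0 : 0 ≤ lam := div_nonneg (by linarith) hpa.le
    have hmu0 : 0 ≤ mu := div_nonneg (by linarith) hpa.le
    have hsum : lam + mu = 1 := by rw [hlam, hmu]; field_simp; ring
    have hcomb : lam * a + mu * pε = b := by rw [hlam, hmu]; field_simp; ring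
    have hconc := Hb_concave.2 (x := a) (y := pε)
      ⟨ha0, by linarith⟩ ⟨hp0, hp1⟩ hlam0 hmu0 hsum
    rw [smul_eq_mul, smul_eq_mul, smul_eq_mul, smul_eq_mul, hcomb] at hconc
    have hpe' : Hb a - ρ * a ≤ Hb pε - ρ * pε := by nlinarith [hape]
    have hlam' : lam = 1 - mu := by linarith
    rw [hlam'] at hconc hcomb
    have e1 : mu * (Hb a - ρ * a) ≤ mu * (Hb pε - ρ * pε) :=
      mul_le_mul_of_nonneg_left hpe' hmu0
    have e2 : ρ * b = ρ * ((1 - mu) * a + mu * pε) := by rw [hcomb]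
    have e3 : Hb a - ρ * a ≤ Hb b - ρ * b := by nlinarith [hconc, e1, e2]
    nlinarith [mul_le_mul_of_nonneg_left e3 hc.le]
  -- values of h at endpoints
  have h0 : h 0 = 0 := by rw [hlow 0 le_rfl hp0, Hb_zero]; ring
  have h1 : h 1 = ρ := hhigh 1 hp1 le_rfl
  intro z ⟨hz0, hz1⟩
  set F : ℝ → ℝ := fun δ => (1 - ε) * Hb δ + (1 - ε) * (1 - δ) * h 1 + ε * h (1 - δ)
    + (1 - ε) * δ * h 0 with hF
  have Fval_low : ∀ δ : ℝ, 0 ≤ δ → δ ≤ 1 - pε →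
      F δ = ((1 - ε) * Hb δ - δ * (1 - ε) * ρ) + ρ := by
    intro δ hδ0 hδp
    have : h (1 - δ) = ρ := hhigh (1 - δ) (by linarith) (by linarith)
    simp only [hF]; rw [this, h0, h1]; ring
  have Fval_high : ∀ δ : ℝ, 1 - pε ≤ δ → δ ≤ 1 →
      F δ = (1 - ε^2) * Hb (1 - δ) + (1 - ε)^2 * (1 - δ) * ρ := by
    intro δ hδp hδ1
    have hh : h (1 - δ) = (1 - ε) * Hb (1 - δ) - (1 - δ) * (1 - ε) * ρ :=
      hlow (1 - δ) (by linarith) (by linarith)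
    simp only [hF]; rw [hh, h0, h1, ← Hb_one_sub δ]; ring
  -- global upper bound: F δ ≤ 2ρ for δ ∈ [0,1]
  have UB : ∀ δ : ℝ, 0 ≤ δ → δ ≤ 1 → F δ ≤ ρ + ρ := by
    intro δ hδ0 hδ1
    rcases le_or_gt δ (1 - pε) with hcase | hcase
    · rw [Fval_low δ hδ0 hcase]
      rcases le_or_gt δ (1/2) with hhalf | hhalf
      · have := key δ hδ0 hhalf; linarith
      · have hk := key (1 - δ) (by linarith) (by linarith)
        rw [Hb_one_sub] at hk
        have hprod : 0 ≤ ((1 - ε) * ρ) * (2 * δ - 1) :=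
          mul_nonneg (mul_nonneg hc.le hρ0) (by linarith)
        linarith [hk, hprod]
    · rw [Fval_high δ hcase.le hδ1]
      have hu0 : (0:ℝ) ≤ 1 - δ := by linarith
      have hu12 : 1 - δ ≤ 1/2 := by linarith
      have hk := key (1 - δ) hu0 (by linarith)
      have hk2 := mul_le_mul_of_nonneg_left hk (by linarith : (0:ℝ) ≤ 1 + ε)
      have hprod : 0 ≤ ((1 - ε) * ρ) * (1 - 2 * (1 - δ)) :=
        mul_nonneg (mul_nonneg hc.le hρ0) (by linarith)
      linarith [hk2, hprod]
  -- the sup is attained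
  rcases le_or_gt z pε with hzp | hzp
  · -- z ≤ pε : maximum at δ = z
    have hz : h z = (1 - ε) * Hb z - z * (1 - ε) * ρ := hlow z hz0 hzp
    have hmem : h z + ρ ∈ F '' Set.Icc (0:ℝ) z := by
      refine ⟨z, ⟨hz0, le_rfl⟩, ?_⟩
      rw [Fval_low z hz0 (by linarith), hz]
    have hub : ∀ y ∈ F '' Set.Icc (0:ℝ) z, y ≤ h z + ρ := by
      rintro y ⟨δ, ⟨hδ0, hδz⟩, rfl⟩
      rw [Fval_low δ hδ0 (by linarith), hz]
      have := mono δ z hδ0 hδz hzp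
      linarith
    exact le_antisymm (le_csSup ⟨h z + ρ, fun y hy => hub y hy⟩ hmem)
      (csSup_le ⟨_, hmem⟩ hub)
  · -- pε < z : maximum at δ = pε
    have hz : h z = ρ := hhigh z hzp.le hz1
    have hmem : h z + ρ ∈ F '' Set.Icc (0:ℝ) z := by
      refine ⟨pε, ⟨hp0, hzp.le⟩, ?_⟩
      rw [Fval_low pε hp0 (by linarith), hz]
      nlinarith [keyeq]
    have hub : ∀ y ∈ F '' Set.Icc (0:ℝ) z, y ≤ h z + ρ := by
      rintro y ⟨δ, ⟨hδ0, hδz⟩, rfl⟩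
      rw [hz]
      exact UB δ hδ0 (le_trans hδz hz1)
    exact le_antisymm (le_csSup ⟨h z + ρ, fun y hy => hub y hy⟩ hmem)
      (csSup_le ⟨_, hmem⟩ hub)
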